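/- Let S, T, U be finsets of ι and let b, c ∈ ι with c ∈ U, b ∉ U, b ≠ c, b ∉ S ∪ T and c ∉ S ∪ T. Then (m_S * F_U) * (m_T * F_{{b,c}}) = m_{S ∪ T ∪ {b}} * F_{U \ {c}} + m_{S ∪ T ∪ {b,c}} * F_{U \ {c}} + m_{S ∪ T ∪ {c}} in R (the semantic identity underlying multiplication rule 17 of the Multiplication Rewriting Principle, where U ∩ V = {c} and V \ U = {b}). -/
import Mathlib


variable {ι : Type*} [DecidableEq ι]

/-- Monomial semantics: `m S` evaluates an assignment `a` to `∏ i ∈ S, a i`. -/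
def m (S : Finset ι) : (ι → ZMod 2) → ZMod 2 :=
  fun a => ∏ i ∈ S, a i

/-- Power-set sum semantics: `F U` evaluates `a` to the sum over nonempty subsets `A ⊆ U`
of `∏ i ∈ A, a i`. -/
def F (U : Finset ι) : (ι → ZMod 2) → ZMod 2 :=
  fun a => ∑ A ∈ U.powerset.erase ∅, ∏ i ∈ A, a i

lemma F_eq (V : Finset ι) (a : ι → ZMod 2) :
    F V a = ∏ i ∈ V, (1 + a i) + 1 := by
  have h : ∏ i ∈ V, (a i + 1) = ∑ t ∈ V.powerset, (∏ i ∈ t, a i) * ∏ i ∈ V \ t, (1 : ZMod 2) :=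
    Finset.prod_add a (fun _ => (1 : ZMod 2)) V
  simp only [Finset.prod_const_one, mul_one] at h
  have h0 : (∅ : Finset ι) ∈ V.powerset := Finset.empty_mem_powerset V
  have h2 := Finset.add_sum_erase V.powerset (fun t => ∏ i ∈ t, a i) h0
  simp only [Finset.prod_empty] at h2
  have : F V a = ∑ A ∈ V.powerset.erase ∅, ∏ i ∈ A, a i := rfl
  rw [this]
  have hc : ∀ x : ZMod 2, 1 + x = x + 1 := fun x => by ring
  have : (1 : ZMod 2) + ∑ A ∈ V.powerset.erase ∅, ∏ i ∈ A, a i = ∏ i ∈ V, (a i + 1) := by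
    rw [h]; exact h2
  have hchar : ∀ x y : ZMod 2, 1 + x = y → x = y + 1 := by decide
  have := hchar _ _ this
  rw [this]
  congr 1
  exact Finset.prod_congr rfl fun i _ => by ring

lemma m_mul (S T : Finset ι) (a : ι → ZMod 2) :
    m S a * m T a = m (S ∪ T) a := by
  unfold m
  rw [← Finset.prod_union_inter]
  have hsub : S ∩ T ⊆ S ∪ T := (Finset.inter_subset_left).trans Finset.subset_union_left
  rw [← Finset.prod_sdiff hsub]
  rw [mul_assoc, ← Finset.prod_mul_distrib]
  congr 1
  have hx : ∀ x : ZMod 2, x * x = x := by decide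
  exact Finset.prod_congr rfl fun i _ => hx (a i)

theorem stmt16 (S T U : Finset ι) (b c : ι)
    (hcU : c ∈ U) (hbU : b ∉ U) (hbc : b ≠ c)
    (hbST : b ∉ S ∪ T) (hcST : c ∉ S ∪ T) :
    (m S * F U) * (m T * F {b, c})
      = m (S ∪ T ∪ {b}) * F (U \ {c}) + m (S ∪ T ∪ {b, c}) * F (U \ {c})
        + m (S ∪ T ∪ {c}) := by
  funext a
  simp only [Pi.mul_apply, Pi.add_apply]
  have hFU : F U a = (1 + a c) * ∏ i ∈ U \ {c}, (1 + a i) + 1 := by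
    rw [F_eq, ← Finset.erase_eq,
      ← Finset.mul_prod_erase U (fun i => 1 + a i) hcU]
  have hFbc : F ({b, c} : Finset ι) a = (1 + a b) * (1 + a c) + 1 := by
    rw [F_eq]
    rw [Finset.prod_insert (by simp [hbc]), Finset.prod_singleton]
  have hF' : F (U \ {c}) a = ∏ i ∈ U \ {c}, (1 + a i) + 1 := F_eq _ a
  have h1 : m (S ∪ T ∪ {b}) a = m (S ∪ T) a * a b := by
    unfold m
    rw [Finset.union_comm (S ∪ T) {b}, ← Finset.insert_eq,
      Finset.prod_insert hbST, mul_comm]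
  have h3 : m (S ∪ T ∪ {c}) a = m (S ∪ T) a * a c := by
    unfold m
    rw [Finset.union_comm (S ∪ T) {c}, ← Finset.insert_eq,
      Finset.prod_insert hcST, mul_comm]
  have h2 : m (S ∪ T ∪ {b, c}) a = m (S ∪ T) a * (a b * a c) := by
    unfold m
    rw [Finset.union_comm (S ∪ T) {b, c}]
    have : ({b, c} : Finset ι) ∪ (S ∪ T) = insert b (insert c (S ∪ T)) := by
      rw [Finset.insert_union, ← Finset.insert_eq]
    rw [this, Finset.prod_insert (by simp [hbc, hbST]),
      Finset.prod_insert hcST]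
    ring
  have hm : m S a * m T a = m (S ∪ T) a := m_mul S T a
  have lhs_eq : m S a * F U a * (m T a * F ({b, c} : Finset ι) a)
      = (m S a * m T a) * (F U a * F ({b, c} : Finset ι) a) := by ring
  rw [lhs_eq, hm, hFU, hFbc, h1, h2, h3, hF']
  have key : ∀ s u β γ : ZMod 2,
      s * (((1 + γ) * u + 1) * ((1 + β) * (1 + γ) + 1))
        = s * β * (u + 1) + s * (β * γ) * (u + 1) + s * γ := by decide
  have := key (m (S ∪ T) a) (∏ i ∈ U \ {c}, (1 + a i)) (a b) (a c)
  linear_combination this
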